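/- Inductive error propagation bound (key step of Lemma A.1/Lemma 4.5 analogue): suppose nonnegative reals E_2, …, E_s, e, and h ≤ C_H satisfy e < δ < 1 and, for each i, E_i ≤ C e + C h e² + h Σ_{j=2}^{i−1} C (h + e + E_j) E_j. Then there exists a constant 𝐂 depending only on C, C_H, s, δ such that E_i ≤ 𝐂 e + 𝐂 h e² for all i = 2, …, s. -/

import Mathlib

noncomputable def gAux (C C_H : ℝ) (s : ℕ) : ℕ → ℝ
  | 0 => C
  | n+1 => C + C*C_H + C_H*(s+1)*C*(C_H+1+gAux C C_H s n)*(gAux C C_H s n) + gAux C C_H s n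

lemma gAux_pos (C C_H : ℝ) (s : ℕ) (hC : 0 < C) (hCH : 0 < C_H) :
    ∀ n, 0 < gAux C C_H s n := by
  intro n
  induction n with
  | zero => simpa [gAux] using hC
  | succ n ih =>
    have hs : (0:ℝ) ≤ (s:ℝ)+1 := by positivity
    have : 0 ≤ C_H*(s+1)*C*(C_H+1+gAux C C_H s n)*(gAux C C_H s n) := by positivity
    simp only [gAux]
    nlinarith

lemma gAux_mono (C C_H : ℝ) (s : ℕ) (hC : 0 < C) (hCH : 0 < C_H) :
    Monotone (gAux C C_H s) := by
  apply monotone_nat_of_le_succ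
  intro n
  have h1 := gAux_pos C C_H s hC hCH n
  have : 0 ≤ C_H*(s+1)*C*(C_H+1+gAux C C_H s n)*(gAux C C_H s n) := by positivity
  simp only [gAux]
  nlinarith

theorem inductive_error_bound (C C_H δ : ℝ) (s : ℕ)
    (hC : 0 < C) (hCH : 0 < C_H) (hδ0 : 0 < δ) (hδ1 : δ < 1) :
    ∃ K : ℝ, 0 < K ∧
      ∀ (E : ℕ → ℝ) (e h : ℝ),
        0 ≤ e → e < δ → 0 ≤ h → h ≤ C_H →
        (∀ i, 2 ≤ i → i ≤ s → 0 ≤ E i) →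
        (∀ i, 2 ≤ i → i ≤ s →
          E i ≤ C * e + C * h * e ^ 2
            + h * ∑ j ∈ Finset.Ico 2 i, C * (h + e + E j) * E j) →
        ∀ i, 2 ≤ i → i ≤ s → E i ≤ K * e + K * h * e ^ 2 := by
  refine ⟨gAux C C_H s s, gAux_pos C C_H s hC hCH s, ?_⟩
  intro E e h he0 heδ hh0 hhCH hE0 hrec
  have he1 : e < 1 := lt_trans heδ hδ1
  have he2 : e ^ 2 ≤ e := by nlinarith
  -- main claim by strong induction
  have main : ∀ i, 2 ≤ i → i ≤ s → E i ≤ gAux C C_H s i * e := by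
    intro i
    induction i using Nat.strong_induction_on with
    | _ i IH =>
      intro hi2 his
      set G : ℝ := gAux C C_H s (i-1) with hG
      have hGpos : 0 < G := gAux_pos C C_H s hC hCH _
      -- per-term bound
      have hterm : ∀ j ∈ Finset.Ico 2 i, C * (h + e + E j) * E j ≤ C*(C_H+1+G)*(G*e) := by
        intro j hj
        rw [Finset.mem_Ico] at hj
        obtain ⟨hj2, hji⟩ := hj
        have hjs : j ≤ s := le_trans (Nat.le_of_lt hji) his
        have hEj := IH j hji hj2 hjs
        have hgle : gAux C C_H s j ≤ G := gAux_mono C C_H s hC hCH (by omega)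
        have hEj' : E j ≤ G * e := le_trans hEj (by
          have := gAux_pos C C_H s hC hCH j
          nlinarith)
        have hEj0 := hE0 j hj2 hjs
        have hsumle : h + e + E j ≤ C_H + 1 + G := by nlinarith
        have h0 : (0:ℝ) ≤ h + e + E j := by linarith
        calc C * (h + e + E j) * E j ≤ C * (C_H+1+G) * E j := by
              apply mul_le_mul_of_nonneg_right _ hEj0
              exact mul_le_mul_of_nonneg_left hsumle hC.le
          _ ≤ C * (C_H+1+G) * (G*e) := by
              apply mul_le_mul_of_nonneg_left hEj' (by nlinarith)
      have hcard : (Finset.Ico 2 i).card = i - 2 := Nat.card_Ico 2 i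
      have hsum : ∑ j ∈ Finset.Ico 2 i, C * (h + e + E j) * E j
          ≤ (i-2 : ℕ) * (C*(C_H+1+G)*(G*e)) := by
        calc ∑ j ∈ Finset.Ico 2 i, C * (h + e + E j) * E j
            ≤ ∑ j ∈ Finset.Ico 2 i, C*(C_H+1+G)*(G*e) := Finset.sum_le_sum hterm
          _ = (i-2 : ℕ) * (C*(C_H+1+G)*(G*e)) := by
              rw [Finset.sum_const, hcard]; simp [nsmul_eq_mul]
      have hcast : ((i-2 : ℕ) : ℝ) ≤ (s:ℝ)+1 := by
        have : i - 2 ≤ s := by omega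
        exact_mod_cast le_trans (Nat.cast_le.mpr this) (by linarith : (s:ℝ) ≤ (s:ℝ)+1)
      have hbound := hrec i hi2 his
      have htermpos : 0 ≤ C*(C_H+1+G)*(G*e) := by positivity
      have hgi : gAux C C_H s i = C + C*C_H + C_H*(s+1)*C*(C_H+1+G)*G + G := by
        have : i = (i-1)+1 := by omega
        rw [this, gAux, ← hG]
      rw [hgi]
      have hhsum : h * ∑ j ∈ Finset.Ico 2 i, C * (h + e + E j) * E j
          ≤ C_H * ((s:ℝ)+1) * (C*(C_H+1+G)*(G*e)) := by
        calc h * ∑ j ∈ Finset.Ico 2 i, C * (h + e + E j) * E j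
            ≤ h * ((i-2 : ℕ) * (C*(C_H+1+G)*(G*e))) := by
              apply mul_le_mul_of_nonneg_left hsum hh0
          _ ≤ C_H * ((s:ℝ)+1) * (C*(C_H+1+G)*(G*e))  := by
              have h1 : ((i-2:ℕ):ℝ) * (C*(C_H+1+G)*(G*e)) ≤ ((s:ℝ)+1) * (C*(C_H+1+G)*(G*e)) :=
                mul_le_mul_of_nonneg_right hcast htermpos
              nlinarith [mul_nonneg (by positivity : (0:ℝ) ≤ ((i-2:ℕ):ℝ)) htermpos]
      have hhe2 : C * h * e ^ 2 ≤ C * C_H * e := by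
        calc C * h * e ^ 2 ≤ C * C_H * e ^ 2 := by
              apply mul_le_mul_of_nonneg_right _ (sq_nonneg e)
              exact mul_le_mul_of_nonneg_left hhCH hC.le
          _ ≤ C * C_H * e := by
              apply mul_le_mul_of_nonneg_left he2 (by positivity)
      have expand : (C + C*C_H + C_H*((s:ℝ)+1)*C*(C_H+1+G)*G + G)*e
          = C*e + C*C_H*e + C_H*((s:ℝ)+1)*(C*(C_H+1+G)*(G*e)) + G*e := by ring
      rw [expand]
      linarith [mul_nonneg hGpos.le he0]
  intro i hi2 his
  have h1 := main i hi2 his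
  have h2 : gAux C C_H s i ≤ gAux C C_H s s := gAux_mono C C_H s hC hCH his
  have hK := gAux_pos C C_H s hC hCH s
  nlinarith [mul_nonneg (mul_nonneg hK.le hh0) (sq_nonneg e)]
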